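/- Let D be a division ring with quasi-derivation (σ, δ) and S = D[x; σ, δ]. If p(x) ∈ S satisfies p(x)·a ∈ D·p(x) + D for all a ∈ D, then p(x) is a cv-polynomial: there exists a quasi-derivation (σ', δ') on D (with σ' a ring endomorphism and δ' a σ'-derivation) such that p(x)·a = σ'(a)·p(x) + δ'(a) for all a ∈ D. -/

import Mathlib

/-- In S = D[x;σ,δ] over a division ring D (modeled by a ring S with embedding ι and
element X with X·ι(a) = ι(σ a)·X + ι(δ a), where the monomials Xⁱ are left D-independent),
if p has degree n ≥ 1 and p·a ∈ D·p + D for all a ∈ D, then p is a cv-polynomial: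
there is a quasi-derivation (σ',δ') on D with p·ι(a) = ι(σ' a)·p + ι(δ' a) for all a. -/
theorem semi_invariance_gives_cv_polynomial {D S : Type*} [DivisionRing D] [Ring S]
    (σ : D →+* D) (δ : D → D)
    (hadd : ∀ r s : D, δ (r + s) = δ r + δ s)
    (hleib : ∀ r s : D, δ (r * s) = σ r * δ s + δ r * s)
    (ι : D →+* S) (X : S)
    (hcomm : ∀ a : D, X * ι a = ι (σ a) * X + ι (δ a))
    (hindep : ∀ (c : ℕ → D) (m : ℕ),
      (∑ i ∈ Finset.range m, ι (c i) * X ^ i) = 0 → ∀ i < m, c i = 0)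
    (n : ℕ) (hn : 1 ≤ n) (a : ℕ → D) (han : a n ≠ 0)
    (p : S) (hp : p = ∑ i ∈ Finset.range (n + 1), ι (a i) * X ^ i)
    (hsemi : ∀ r : D, ∃ r₁ r₂ : D, p * ι r = ι r₁ * p + ι r₂) :
    ∃ (σ' : D →+* D) (δ' : D → D),
      (∀ r s : D, δ' (r + s) = δ' r + δ' s) ∧
      (∀ r s : D, δ' (r * s) = σ' r * δ' s + δ' r * s) ∧
      ∀ r : D, p * ι r = ι (σ' r) * p + ι (δ' r) := by
  classical
  -- expansion of ι c * p + ι d as a sum of monomials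
  have key : ∀ c d : D, ι c * p + ι d =
      ∑ i ∈ Finset.range (n + 1), ι (c * a i + if i = 0 then d else 0) * X ^ i := by
    intro c d
    have h1 : ∑ i ∈ Finset.range (n + 1), ι (c * a i + if i = 0 then d else 0) * X ^ i =
        (∑ i ∈ Finset.range (n + 1), ι (c * a i) * X ^ i) +
        ∑ i ∈ Finset.range (n + 1), ι (if i = 0 then d else 0) * X ^ i := by
      rw [← Finset.sum_add_distrib]
      refine Finset.sum_congr rfl fun i _ => ?_
      rw [map_add, add_mul]
    have h2 : ∑ i ∈ Finset.range (n + 1), ι (if i = 0 then d else 0) * X ^ i = ι d := by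
      rw [Finset.sum_eq_single 0]
      · simp
      · intro i _ hi; simp [hi]
      · intro h; simp at h
    have h3 : ι c * p = ∑ i ∈ Finset.range (n + 1), ι (c * a i) * X ^ i := by
      rw [hp, Finset.mul_sum]
      refine Finset.sum_congr rfl fun i _ => ?_
      rw [map_mul, mul_assoc]
    rw [h1, h2, h3]
  have uniq0 : ∀ c d : D, ι c * p + ι d = 0 → c = 0 ∧ d = 0 := by
    intro c d h
    rw [key] at h
    have hz := hindep _ _ h
    have hcn := hz n (by omega)
    have hne : n ≠ 0 := by omega
    rw [if_neg hne, add_zero] at hcn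
    have hc : c = 0 := by
      rcases mul_eq_zero.mp hcn with h' | h'
      · exact h'
      · exact absurd h' han
    have hd := hz 0 (by omega)
    rw [if_pos rfl, hc, zero_mul, zero_add] at hd
    exact ⟨hc, hd⟩
  have uniq : ∀ c₁ c₂ d₁ d₂ : D, ι c₁ * p + ι d₁ = ι c₂ * p + ι d₂ → c₁ = c₂ ∧ d₁ = d₂ := by
    intro c₁ c₂ d₁ d₂ h
    have h0 : ι (c₁ - c₂) * p + ι (d₁ - d₂) = 0 := by
      rw [map_sub, map_sub, sub_mul, sub_add_sub_comm, h, sub_self]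
    obtain ⟨h1, h2⟩ := uniq0 _ _ h0
    constructor
    · exact sub_eq_zero.mp h1
    · exact sub_eq_zero.mp h2
  -- the candidate maps
  set σf : D → D := fun r => (hsemi r).choose with hσf
  set δf : D → D := fun r => (hsemi r).choose_spec.choose with hδf
  have spec : ∀ r : D, p * ι r = ι (σf r) * p + ι (δf r) := fun r =>
    (hsemi r).choose_spec.choose_spec
  have hone : σf 1 = 1 ∧ δf 1 = 0 := by
    apply uniq
    rw [← spec 1]
    simp
  have hzero : σf 0 = 0 ∧ δf 0 = 0 := by
    apply uniq
    rw [← spec 0]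
    simp
  have haddf : ∀ r s : D, σf (r + s) = σf r + σf s ∧ δf (r + s) = δf r + δf s := by
    intro r s
    apply uniq
    rw [← spec (r + s), map_add, mul_add, spec r, spec s, map_add, map_add, add_mul]
    abel
  have hmulf : ∀ r s : D,
      σf (r * s) = σf r * σf s ∧ δf (r * s) = σf r * δf s + δf r * s := by
    intro r s
    apply uniq
    rw [← spec (r * s), map_mul, ← mul_assoc, spec r, add_mul, mul_assoc, ← map_mul,
      spec s, mul_add, ← mul_assoc, ← map_mul, ← map_mul, map_add, add_assoc]
  refine ⟨⟨⟨⟨σf, hone.1⟩, fun r s => (hmulf r s).1⟩, hzero.1, fun r s => (haddf r s).1⟩,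
    δf, fun r s => (haddf r s).2, fun r s => (hmulf r s).2, fun r => spec r⟩
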